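/- There exists a Banach limit L on ℓ∞ that is invariant under the doubling dilation operator: L(x₁, x₂, x₃, …) = L(x₁, x₁, x₂, x₂, x₃, x₃, …) for every bounded sequence x. -/

import Mathlib

open Filter Finset Topology

noncomputable section BanachLimitAux

namespace BanachLimitAux

/-- Partial harmonic sums. -/
def H (N : ℕ) : ℝ := ∑ n ∈ range N, (1 : ℝ) / (n + 1)

/-- Weighted partial sums with harmonic weights. -/
def S (x : ℕ → ℝ) (N : ℕ) : ℝ := ∑ n ∈ range N, x n / (n + 1)

/-- Logarithmic averages along the subsequence `2^j`. -/
def A (x : ℕ → ℝ) (j : ℕ) : ℝ := S x (2 ^ j) / H (2 ^ j)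

/-- Cesàro averages of the logarithmic averages. -/
def B (x : ℕ → ℝ) (J : ℕ) : ℝ := (J : ℝ)⁻¹ * ∑ j ∈ range J, A x j

lemma H_mono : Monotone H := by
  intro a b hab
  exact Finset.sum_le_sum_of_subset_of_nonneg (Finset.range_subset_range.2 hab)
    (fun i _ _ => by positivity)

lemma H_pos {N : ℕ} (hN : 1 ≤ N) : 0 < H N := by
  have h1 : H 1 = 1 := by simp [H]
  have := H_mono hN
  rw [h1] at this
  linarith

lemma H_top : Tendsto H atTop atTop := Real.tendsto_sum_range_one_div_nat_succ_atTop

lemma two_pow_top : Tendsto (fun j : ℕ => 2 ^ j) atTop atTop :=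
  tendsto_pow_atTop_atTop_of_one_lt one_lt_two

lemma H2_top : Tendsto (fun j : ℕ => H (2 ^ j)) atTop atTop := H_top.comp two_pow_top

lemma H_two_mul_sub_le (N : ℕ) : H (2 * N) - H N ≤ 1 := by
  have h : H (2 * N) = H N + ∑ i ∈ range N, (1 : ℝ) / (N + i + 1) := by
    rw [H, H, two_mul, Finset.sum_range_add]
    congr 1
    apply Finset.sum_congr rfl
    intro i _
    push_cast
    ring
  rw [h]
  have hb : ∑ i ∈ range N, (1 : ℝ) / (N + i + 1) ≤ ∑ _i ∈ range N, (1 : ℝ) / N := by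
    apply Finset.sum_le_sum
    intro i hi
    have hi' : (1 : ℝ) ≤ N := by
      have := Finset.mem_range.1 hi; exact_mod_cast Nat.one_le_iff_ne_zero.2 (by omega)
    apply one_div_le_one_div_of_le (by linarith [ (Nat.cast_nonneg (α := ℝ) i)])
    · push_cast; linarith [Nat.cast_nonneg (α := ℝ) i]
  rcases Nat.eq_zero_or_pos N with h0 | h0
  · simp [h0]
  · have : ∑ _i ∈ range N, (1 : ℝ) / N = 1 := by
      rw [Finset.sum_const, card_range, nsmul_eq_mul]
      field_simp
    linarith

lemma S_abs_le {x : ℕ → ℝ} {C : ℝ} (hC : ∀ n, |x n| ≤ C) (N : ℕ) : |S x N| ≤ C * H N := by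
  calc |S x N| ≤ ∑ n ∈ range N, |x n / (n + 1)| := Finset.abs_sum_le_sum_abs _ _
    _ ≤ ∑ n ∈ range N, C * ((1:ℝ) / (n + 1)) := by
        apply Finset.sum_le_sum
        intro n _
        rw [abs_div, abs_of_pos (show (0:ℝ) < (n:ℝ) + 1 by positivity)]
        rw [div_eq_mul_one_div]
        gcongr
        exact hC n
    _ = C * H N := by rw [H, Finset.mul_sum]

lemma C_nonneg {x : ℕ → ℝ} {C : ℝ} (hC : ∀ n, |x n| ≤ C) : 0 ≤ C :=
  le_trans (abs_nonneg _) (hC 0)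

lemma A_abs_le {x : ℕ → ℝ} {C : ℝ} (hC : ∀ n, |x n| ≤ C) (j : ℕ) : |A x j| ≤ C := by
  have hH : 0 < H (2 ^ j) := H_pos Nat.one_le_two_pow
  rw [A, abs_div, abs_of_pos hH, div_le_iff₀ hH]
  calc |S x (2 ^ j)| ≤ C * H (2 ^ j) := S_abs_le hC _

lemma B_abs_le {x : ℕ → ℝ} {C : ℝ} (hC : ∀ n, |x n| ≤ C) (J : ℕ) : |B x J| ≤ C := by
  rcases Nat.eq_zero_or_pos J with h0 | h0
  · simpa [B, h0] using C_nonneg hC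
  · rw [B, abs_mul, abs_inv, Nat.abs_cast]
    have hJ : (0:ℝ) < J := by exact_mod_cast h0
    rw [inv_mul_le_iff₀ hJ]
    calc |∑ j ∈ range J, A x j| ≤ ∑ j ∈ range J, |A x j| := Finset.abs_sum_le_sum_abs _ _
      _ ≤ ∑ _j ∈ range J, C := Finset.sum_le_sum fun j _ => A_abs_le hC j
      _ = J * C := by rw [Finset.sum_const, card_range, nsmul_eq_mul]

lemma B_nonneg {x : ℕ → ℝ} (hx : ∀ n, 0 ≤ x n) (J : ℕ) : 0 ≤ B x J := by
  rw [B]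
  apply mul_nonneg (by positivity)
  apply Finset.sum_nonneg
  intro j _
  rw [A]
  apply div_nonneg _ (H_pos Nat.one_le_two_pow).le
  apply Finset.sum_nonneg
  intro n _
  exact div_nonneg (hx n) (by positivity)

lemma B_add (x y : ℕ → ℝ) (J : ℕ) : B (fun n => x n + y n) J = B x J + B y J := by
  simp only [B, A, S]
  rw [← mul_add, ← Finset.sum_add_distrib]
  congr 1
  apply Finset.sum_congr rfl
  intro j _
  rw [← add_div]
  congr 1
  rw [← Finset.sum_add_distrib]
  apply Finset.sum_congr rfl
  intro n _
  rw [← add_div]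

lemma B_smul (c : ℝ) (x : ℕ → ℝ) (J : ℕ) : B (fun n => c * x n) J = c * B x J := by
  have hA : ∀ j, A (fun n => c * x n) j = c * A x j := by
    intro j
    rw [A, A, S, S]
    simp only [mul_div_assoc]
    rw [← Finset.mul_sum, mul_div_assoc]
  simp only [B, hA]
  rw [← Finset.mul_sum]
  ring

/-- Regularity: the logarithmic averages of a convergent sequence converge. -/
lemma A_tendsto {x : ℕ → ℝ} {a : ℝ} (hx : Tendsto x atTop (𝓝 a)) :
    Tendsto (A x) atTop (𝓝 a) := by
  have hg0 : ∀ n : ℕ, (0:ℝ) ≤ 1 / (n + 1) := fun n => by positivity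
  have hlo : (fun n : ℕ => (x n - a) * (1 / (n + 1))) =o[atTop] fun n : ℕ => (1:ℝ) / (n + 1) := by
    have h1 : (fun n : ℕ => x n - a) =o[atTop] (fun _ : ℕ => (1:ℝ)) :=
      (Asymptotics.isLittleO_one_iff ℝ).2 (by simpa using hx.sub (tendsto_const_nhds (x := a)))
    simpa using h1.mul_isBigO (Asymptotics.isBigO_refl (fun n : ℕ => (1:ℝ) / (n + 1)) atTop)
  have hsum := hlo.sum_range hg0 H_top
  have hS : ∀ N, ∑ i ∈ range N, (x i - a) * (1 / (i + 1)) = S x N - a * H N := by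
    intro N
    rw [S, H, Finset.mul_sum, ← Finset.sum_sub_distrib]
    apply Finset.sum_congr rfl
    intro n _
    field_simp
  have hquot : Tendsto (fun N => (S x N - a * H N) / H N) atTop (𝓝 0) := by
    have := hsum.tendsto_div_nhds_zero
    simp only [hS] at this; exact this
  have hfull : Tendsto (fun N => S x N / H N) atTop (𝓝 a) := by
    have : Tendsto (fun N => (S x N - a * H N) / H N + a) atTop (𝓝 (0 + a)) :=
      hquot.add tendsto_const_nhds
    rw [zero_add] at this
    apply this.congr'
    filter_upwards [Filter.eventually_ge_atTop 1] with N hN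
    have hH : H N ≠ 0 := (H_pos hN).ne'
    field_simp
    ring
  exact hfull.comp two_pow_top

lemma B_tendsto {x : ℕ → ℝ} {a : ℝ} (hx : Tendsto x atTop (𝓝 a)) :
    Tendsto (B x) atTop (𝓝 a) := (A_tendsto hx).cesaro

/-- Telescoping bound. -/
lemma tele_le_one (M : ℕ) : ∑ n ∈ range M, ((1:ℝ) / (n + 1) - 1 / (n + 2)) ≤ 1 := by
  have h := Finset.sum_range_sub' (fun n : ℕ => (1:ℝ) / (n + 1)) M
  have he : ∀ n ∈ range M, ((1:ℝ) / (n + 1) - 1 / (n + 2))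
      = (1:ℝ) / (n + 1) - 1 / ((n + 1 : ℕ) + 1) := by
    intro n _; push_cast; ring
  rw [Finset.sum_congr rfl he, h]
  have h1 : (0:ℝ) ≤ 1 / ((M:ℝ) + 1) := by positivity
  have h2 : (1:ℝ) / ((0:ℕ) + 1 : ℝ) = 1 := by norm_num
  push_cast
  linarith


lemma tele_nonneg (n : ℕ) : (0:ℝ) ≤ 1 / (n + 1) - 1 / (n + 2) := by
  have h1 : (0:ℝ) < (n:ℝ) + 1 := by positivity
  have h2 : (0:ℝ) < (n:ℝ) + 2 := by positivity
  rw [sub_nonneg]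
  apply one_div_le_one_div_of_le h1 (by linarith)

/-- Shift estimate on the weighted sums. -/
lemma S_shift {x : ℕ → ℝ} {C : ℝ} (hC : ∀ n, |x n| ≤ C) (N : ℕ) :
    |S (fun n => x (n + 1)) N - S x N| ≤ 3 * C := by
  have hC0 : 0 ≤ C := C_nonneg hC
  have h1 : S x (N + 1) = (∑ n ∈ range N, x (n + 1) / (n + 2)) + x 0 := by
    rw [S, Finset.sum_range_succ']
    congr 1
    · apply Finset.sum_congr rfl
      intro n _
      push_cast
      ring_nf
    · norm_num
  have key : S (fun n => x (n + 1)) N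
      = (S x (N + 1) - x 0) + ∑ n ∈ range N, x (n + 1) * (1 / (n + 1) - 1 / (n + 2)) := by
    rw [h1, S]
    rw [add_sub_cancel_right, ← Finset.sum_add_distrib]
    apply Finset.sum_congr rfl
    intro n _
    have h2 : ((n:ℝ) + 1) ≠ 0 := by positivity
    have h3 : ((n:ℝ) + 2) ≠ 0 := by positivity
    field_simp
    ring
  have hlast : |S x (N + 1) - S x N| ≤ C := by
    have hdiff : S x (N + 1) - S x N = x N / ((N:ℝ) + 1) := by
      rw [S, S, Finset.sum_range_succ]; ring
    rw [hdiff, abs_div, abs_of_pos (show (0:ℝ) < (N:ℝ) + 1 by positivity)]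
    have hN1 : (1:ℝ) ≤ (N:ℝ) + 1 := by
      have : (0:ℝ) ≤ (N:ℝ) := Nat.cast_nonneg N
      linarith
    calc |x N| / ((N:ℝ) + 1) ≤ |x N| / 1 := by
          apply div_le_div_of_nonneg_left (abs_nonneg _) one_pos hN1
      _ = |x N| := div_one _
      _ ≤ C := hC N
  have hcorr : |∑ n ∈ range N, x (n + 1) * (1 / (n + 1) - 1 / (n + 2))| ≤ C := by
    calc |∑ n ∈ range N, x (n + 1) * (1 / (n + 1) - 1 / (n + 2))|
        ≤ ∑ n ∈ range N, |x (n + 1) * (1 / (n + 1) - 1 / (n + 2))| :=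
          Finset.abs_sum_le_sum_abs _ _
      _ ≤ ∑ n ∈ range N, C * ((1:ℝ) / (n + 1) - 1 / (n + 2)) := by
          apply Finset.sum_le_sum
          intro n _
          rw [abs_mul, abs_of_nonneg (tele_nonneg n)]
          exact mul_le_mul_of_nonneg_right (hC _) (tele_nonneg n)
      _ = C * ∑ n ∈ range N, ((1:ℝ) / (n + 1) - 1 / (n + 2)) := (Finset.mul_sum _ _ _).symm
      _ ≤ C * 1 := mul_le_mul_of_nonneg_left (tele_le_one N) hC0
      _ = C := mul_one C
  have h0 : |x 0| ≤ C := hC 0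
  calc |S (fun n => x (n + 1)) N - S x N|
      = |(S x (N + 1) - S x N) + (∑ n ∈ range N, x (n + 1) * (1 / (n + 1) - 1 / (n + 2)) - x 0)| := by
        rw [key]; congr 1; ring
    _ ≤ |S x (N + 1) - S x N| + |∑ n ∈ range N, x (n + 1) * (1 / (n + 1) - 1 / (n + 2)) - x 0| :=
        abs_add_le _ _
    _ ≤ C + (C + C) := by
        gcongr
        calc |∑ n ∈ range N, x (n + 1) * (1 / (n + 1) - 1 / (n + 2)) - x 0|
            ≤ |∑ n ∈ range N, x (n + 1) * (1 / (n + 1) - 1 / (n + 2))| + |x 0| := abs_sub _ _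
          _ ≤ C + C := add_le_add hcorr h0
    _ = 3 * C := by ring

/-- Shift estimate on the logarithmic averages. -/
lemma A_shift_tendsto {x : ℕ → ℝ} {C : ℝ} (hC : ∀ n, |x n| ≤ C) :
    Tendsto (fun j => A (fun n => x (n + 1)) j - A x j) atTop (𝓝 0) := by
  apply squeeze_zero_norm (a := fun j => 3 * C / H (2 ^ j))
  · intro j
    have hH : 0 < H (2 ^ j) := H_pos Nat.one_le_two_pow
    rw [Real.norm_eq_abs, A, A, div_sub_div_same, abs_div, abs_of_pos hH]
    gcongr
    exact S_shift hC _
  · exact Tendsto.div_atTop tendsto_const_nhds H2_top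


/-- Dilation identity on the weighted sums. -/
lemma S_dil {x y : ℕ → ℝ} (hy : ∀ n, y n = x (n / 2)) (M : ℕ) :
    S y (2 * M) = S x M + ∑ k ∈ range M, x k / ((2 * k + 1) * (2 * k + 2)) := by
  induction M with
  | zero => simp [S]
  | succ M ih =>
    have h2 : 2 * (M + 1) = (2 * M + 1) + 1 := by ring
    rw [h2, S, Finset.sum_range_succ, Finset.sum_range_succ, ← S, ih, Finset.sum_range_succ]
    have e1 : y (2 * M) = x M := by rw [hy]; congr 1; omega
    have e2 : y (2 * M + 1) = x M := by rw [hy]; congr 1; omega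
    rw [e1, e2]
    have c1 : ((2 * M : ℕ) : ℝ) = 2 * (M : ℝ) := by push_cast; ring
    have c2 : ((2 * M + 1 : ℕ) : ℝ) = 2 * (M : ℝ) + 1 := by push_cast; ring
    rw [c1, c2]
    have hx1 : S x (M + 1) = S x M + x M / ((M:ℝ) + 1) := by
      rw [S, Finset.sum_range_succ, ← S]
    rw [hx1]
    have h3 : (2 * (M:ℝ) + 1) ≠ 0 := by positivity
    have h4 : (2 * (M:ℝ) + 1 + 1) ≠ 0 := by positivity
    have h5 : ((M:ℝ) + 1) ≠ 0 := by positivity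
    have h6 : (2 * (M:ℝ) + 2) ≠ 0 := by positivity
    field_simp
    ring

/-- Bound on the dilation error sum. -/
lemma E_abs_le {x : ℕ → ℝ} {C : ℝ} (hC : ∀ n, |x n| ≤ C) (M : ℕ) :
    |∑ k ∈ range M, x k / ((2 * k + 1) * (2 * k + 2))| ≤ C := by
  have hC0 : 0 ≤ C := C_nonneg hC
  calc |∑ k ∈ range M, x k / ((2 * k + 1) * (2 * k + 2))|
      ≤ ∑ k ∈ range M, |x k / ((2 * k + 1) * (2 * k + 2))| := Finset.abs_sum_le_sum_abs _ _
    _ ≤ ∑ k ∈ range M, C * ((1:ℝ) / (k + 1) - 1 / (k + 2)) := by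
        apply Finset.sum_le_sum
        intro k _
        have hk1 : (0:ℝ) < (2 * (k:ℝ) + 1) * (2 * (k:ℝ) + 2) := by positivity
        rw [abs_div, abs_of_pos hk1]
        have heq : C * ((1:ℝ) / (k + 1) - 1 / (k + 2)) = C / (((k:ℝ) + 1) * ((k:ℝ) + 2)) := by
          have h5 : ((k:ℝ) + 1) ≠ 0 := by positivity
          have h6 : ((k:ℝ) + 2) ≠ 0 := by positivity
          field_simp
          ring
        rw [heq]
        apply div_le_div₀ hC0 (hC k) (by positivity)
        nlinarith [Nat.cast_nonneg (α := ℝ) k]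
    _ = C * ∑ k ∈ range M, ((1:ℝ) / (k + 1) - 1 / (k + 2)) := (Finset.mul_sum _ _ _).symm
    _ ≤ C * 1 := mul_le_mul_of_nonneg_left (tele_le_one M) hC0
    _ = C := mul_one C

/-- Dilation estimate on the logarithmic averages. -/
lemma A_dil_tendsto {x y : ℕ → ℝ} {C : ℝ} (hC : ∀ n, |x n| ≤ C) (hy : ∀ n, y n = x (n / 2)) :
    Tendsto (fun j => A y (j + 1) - A x j) atTop (𝓝 0) := by
  have hC0 : 0 ≤ C := C_nonneg hC
  apply squeeze_zero_norm (a := fun j => 2 * C / H (2 ^ (j + 1)))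
  · intro j
    set N := 2 ^ j with hN
    have hNpos : 1 ≤ N := Nat.one_le_two_pow
    have h2N : 2 ^ (j + 1) = 2 * N := by rw [pow_succ]; ring
    have hH1 : 0 < H N := H_pos hNpos
    have hH2 : 0 < H (2 * N) := H_pos (by omega)
    have hH12 : H N ≤ H (2 * N) := H_mono (by omega)
    set E := ∑ k ∈ range N, x k / ((2 * k + 1) * (2 * k + 2)) with hE
    have hSy : S y (2 * N) = S x N + E := S_dil hy N
    have hd : A y (j + 1) - A x j
        = E / H (2 * N) - S x N * ((H (2 * N) - H N) / (H N * H (2 * N))) := by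
      rw [A, A, h2N, hSy, ← hN]
      field_simp
      ring
    rw [Real.norm_eq_abs, hd, h2N]
    have hEb : |E / H (2 * N)| ≤ C / H (2 * N) := by
      rw [abs_div, abs_of_pos hH2]
      gcongr
      exact E_abs_le hC N
    have hSb : |S x N * ((H (2 * N) - H N) / (H N * H (2 * N)))| ≤ C / H (2 * N) := by
      rw [abs_mul, abs_div, abs_of_nonneg (by linarith : (0:ℝ) ≤ H (2 * N) - H N),
        abs_of_pos (mul_pos hH1 hH2)]
      calc |S x N| * ((H (2 * N) - H N) / (H N * H (2 * N)))
          ≤ (C * H N) * ((H (2 * N) - H N) / (H N * H (2 * N))) := by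
            have hnn : (0:ℝ) ≤ (H (2 * N) - H N) / (H N * H (2 * N)) :=
              div_nonneg (by linarith) (mul_pos hH1 hH2).le
            exact mul_le_mul_of_nonneg_right (S_abs_le hC N) hnn
        _ = C * ((H (2 * N) - H N) / H (2 * N)) := by field_simp
        _ ≤ C * (1 / H (2 * N)) := by
            gcongr
            exact H_two_mul_sub_le N
        _ = C / H (2 * N) := by ring
    calc |E / H (2 * N) - S x N * ((H (2 * N) - H N) / (H N * H (2 * N)))|
        ≤ |E / H (2 * N)| + |S x N * ((H (2 * N) - H N) / (H N * H (2 * N)))| := abs_sub _ _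
      _ ≤ C / H (2 * N) + C / H (2 * N) := add_le_add hEb hSb
      _ = 2 * C / H (2 * N) := by ring
  · exact Tendsto.div_atTop tendsto_const_nhds (H_top.comp (two_pow_top.comp (tendsto_add_atTop_nat 1)))

/-- Shift invariance at the level of `B`. -/
lemma B_shift_tendsto {x : ℕ → ℝ} {C : ℝ} (hC : ∀ n, |x n| ≤ C) :
    Tendsto (fun J => B (fun n => x (n + 1)) J - B x J) atTop (𝓝 0) := by
  have h := (A_shift_tendsto hC).cesaro
  apply h.congr
  intro J
  rw [B, B, ← mul_sub, ← Finset.sum_sub_distrib]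

/-- Dilation invariance at the level of `B`. -/
lemma B_dil_tendsto {x y : ℕ → ℝ} {C : ℝ} (hC : ∀ n, |x n| ≤ C) (hy : ∀ n, y n = x (n / 2)) :
    Tendsto (fun J => B y J - B x J) atTop (𝓝 0) := by
  have hCy : ∀ n, |y n| ≤ C := fun n => by rw [hy]; exact hC _
  have key : ∀ J : ℕ, B y J - B x J
      = (J : ℝ)⁻¹ * (A y 0 - A y J) + (J : ℝ)⁻¹ * ∑ j ∈ range J, (A y (j + 1) - A x j) := by
    intro J
    have h1 : ∑ j ∈ range J, A y (j + 1) = ∑ j ∈ range J, A y j + A y J - A y 0 := by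
      have := Finset.sum_range_succ' (A y) J
      have h2 := Finset.sum_range_succ (A y) J
      rw [h2] at this
      linarith
    rw [B, B, Finset.sum_sub_distrib, h1]
    ring
  simp only [key]
  have first : Tendsto (fun J : ℕ => (J : ℝ)⁻¹ * (A y 0 - A y J)) atTop (𝓝 0) := by
    apply squeeze_zero_norm (a := fun J : ℕ => (J : ℝ)⁻¹ * (2 * C))
    · intro J
      rw [Real.norm_eq_abs, abs_mul, abs_inv, Nat.abs_cast]
      apply mul_le_mul_of_nonneg_left _ (by positivity)
      calc |A y 0 - A y J| ≤ |A y 0| + |A y J| := abs_sub _ _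
        _ ≤ C + C := add_le_add (A_abs_le hCy 0) (A_abs_le hCy J)
        _ = 2 * C := by ring
    · have : Tendsto (fun J : ℕ => (J : ℝ)⁻¹) atTop (𝓝 0) := tendsto_inv_atTop_zero.comp
        tendsto_natCast_atTop_atTop
      simpa using this.mul_const (2 * C)
  have second : Tendsto (fun J : ℕ => (J : ℝ)⁻¹ * ∑ j ∈ range J, (A y (j + 1) - A x j))
      atTop (𝓝 0) := (A_dil_tendsto hC hy).cesaro
  simpa using first.add second

end BanachLimitAux

open BanachLimitAux

/-- There exists a Banach limit `L` on `ℓ∞` (a norm-one continuous linear functional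
extending the limit, nonnegative on nonnegative sequences and shift invariant) which is
moreover invariant under the doubling dilation `(x₁,x₂,x₃,…) ↦ (x₁,x₁,x₂,x₂,x₃,x₃,…)`. -/
theorem exists_dilation_invariant_banach_limit :
    ∃ L : BoundedContinuousFunction ℕ ℝ →L[ℝ] ℝ,
      ‖L‖ = 1 ∧
      (∀ (x : BoundedContinuousFunction ℕ ℝ) (a : ℝ),
        Tendsto (fun n => x n) atTop (nhds a) → L x = a) ∧
      (∀ x : BoundedContinuousFunction ℕ ℝ, (∀ n, 0 ≤ x n) → 0 ≤ L x) ∧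
      (∀ x y : BoundedContinuousFunction ℕ ℝ, (∀ n, y n = x (n + 1)) → L y = L x) ∧
      (∀ x y : BoundedContinuousFunction ℕ ℝ, (∀ n, y n = x (n / 2)) → L y = L x) := by
  obtain ⟨U, hU⟩ : ∃ U : Ultrafilter ℕ, (U : Filter ℕ) ≤ atTop :=
    Filter.exists_ultrafilter_le atTop
  have hxb : ∀ x : BoundedContinuousFunction ℕ ℝ, ∀ n, |x n| ≤ ‖x‖ := by
    intro x n
    simpa [Real.norm_eq_abs] using x.norm_coe_le_norm n
  have key : ∀ x : BoundedContinuousFunction ℕ ℝ,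
      ∃ a : ℝ, Tendsto (fun J => B (⇑x) J) (U : Filter ℕ) (𝓝 a) := by
    intro x
    have hmem : (U.map (fun J => B (⇑x) J) : Filter ℝ) ≤ 𝓟 (Set.Icc (-‖x‖) ‖x‖) := by
      rw [Ultrafilter.coe_map, Filter.le_principal_iff, Filter.mem_map]
      exact Filter.univ_mem' fun J => abs_le.1 (B_abs_le (hxb x) J)
    obtain ⟨a, -, ha⟩ := isCompact_Icc.ultrafilter_le_nhds (U.map (fun J => B (⇑x) J)) hmem
    exact ⟨a, by rwa [Ultrafilter.coe_map] at ha⟩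
  choose g hg using key
  have g_abs : ∀ x, |g x| ≤ ‖x‖ := fun x =>
    le_of_tendsto (hg x).abs (Filter.Eventually.of_forall fun J => B_abs_le (hxb x) J)
  have g_add : ∀ x y, g (x + y) = g x + g y := by
    intro x y
    refine tendsto_nhds_unique (hg (x + y)) ?_
    have h2 : Tendsto (fun J => B ⇑x J + B ⇑y J) (U : Filter ℕ) (𝓝 (g x + g y)) :=
      (hg x).add (hg y)
    apply h2.congr
    intro J
    have hcoe : ⇑(x + y) = fun n => x n + y n := by funext n; simp
    rw [hcoe, B_add]
  have g_smul : ∀ (c : ℝ) x, g (c • x) = c * g x := by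
    intro c x
    refine tendsto_nhds_unique (hg (c • x)) ?_
    have h2 : Tendsto (fun J => c * B ⇑x J) (U : Filter ℕ) (𝓝 (c * g x)) :=
      (hg x).const_mul c
    apply h2.congr
    intro J
    have hcoe : ⇑(c • x) = fun n => c * x n := by funext n; simp
    rw [hcoe, B_smul]
  let L₀ : BoundedContinuousFunction ℕ ℝ →ₗ[ℝ] ℝ :=
    { toFun := g
      map_add' := g_add
      map_smul' := fun c x => by simp only [RingHom.id_apply, smul_eq_mul]; exact g_smul c x }
  let L : BoundedContinuousFunction ℕ ℝ →L[ℝ] ℝ :=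
    L₀.mkContinuous 1 (fun x => by rw [one_mul]; exact (by simpa [Real.norm_eq_abs] using g_abs x : ‖g x‖ ≤ ‖x‖))
  have hLapp : ∀ x, L x = g x := fun x => rfl
  have hreg : ∀ (x : BoundedContinuousFunction ℕ ℝ) (a : ℝ),
      Tendsto (fun n => x n) atTop (nhds a) → L x = a := by
    intro x a hx
    rw [hLapp]
    exact tendsto_nhds_unique (hg x) ((B_tendsto hx).mono_left hU)
  refine ⟨L, ?_, hreg, ?_, ?_, ?_⟩
  · -- norm
    have hle : ‖L‖ ≤ 1 := L₀.mkContinuous_norm_le zero_le_one _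
    set o : BoundedContinuousFunction ℕ ℝ := BoundedContinuousFunction.const ℕ (1 : ℝ) with ho
    have hLo : L o = 1 := hreg o 1 (by simpa [ho] using (tendsto_const_nhds : Tendsto (fun _ : ℕ => (1:ℝ)) atTop (𝓝 1)))
    have hno : ‖o‖ = 1 := by simp [ho]
    have hge : 1 ≤ ‖L‖ := by
      have h := L.le_opNorm o
      rw [hLo, hno, mul_one] at h
      simpa [Real.norm_eq_abs] using h
    linarith
  · -- positivity
    intro x hx
    rw [hLapp]
    exact ge_of_tendsto (hg x) (Filter.Eventually.of_forall fun J => B_nonneg hx J)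
  · -- shift invariance
    intro x y hxy
    rw [hLapp, hLapp]
    refine tendsto_nhds_unique (hg y) ?_
    have hd : Tendsto (fun J => B ⇑y J - B ⇑x J) atTop (𝓝 0) := by
      have hcoe : ⇑y = fun n => x (n + 1) := funext hxy
      rw [hcoe]
      exact B_shift_tendsto (hxb x)
    have h2 := (hg x).add (hd.mono_left hU)
    rw [add_zero] at h2
    exact h2.congr (fun J => by ring)
  · -- dilation invariance
    intro x y hxy
    rw [hLapp, hLapp]
    refine tendsto_nhds_unique (hg y) ?_
    have hd : Tendsto (fun J => B ⇑y J - B ⇑x J) atTop (𝓝 0) := B_dil_tendsto (hxb x) hxy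
    have h2 := (hg x).add (hd.mono_left hU)
    rw [add_zero] at h2
    exact h2.congr (fun J => by ring)
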